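/- Let X₁, …, Xₙ be random variables with ‖X_i‖_{ψ₂} ≤ b, let (X_i*) be their non-increasing rearrangement, and 1 ≤ k ≤ n. Then E √((1/k) Σ_{i=1}^k (X_i*)²) ≤ c b √(log(2n/k)) for a universal constant c. -/

import Mathlib

open MeasureTheory Real Finset

/-- Order statistics of ψ₂ random variables: if `‖X_i‖_{ψ₂} ≤ b` (i.e.
`E exp((X_i/b)²) ≤ 2`) and `(Y i)` is the pointwise non-increasing rearrangement of
`(|X i|)`, then `E √((1/k) Σ_{i<k} (X_i*)²) ≤ c b √(log(2n/k))`. -/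
theorem psi2_order_statistics :
    ∃ c : ℝ, 0 < c ∧
      ∀ (Ω : Type) (mΩ : MeasureSpace Ω), IsProbabilityMeasure (volume : Measure Ω) →
      ∀ (n k : ℕ), 1 ≤ k → k ≤ n →
      ∀ (b : ℝ), 0 < b →
      ∀ (X Y : Fin n → Ω → ℝ),
        (∀ i, Measurable (X i)) →
        (∀ i, Integrable (fun ω => Real.exp ((X i ω / b) ^ 2))) →
        (∀ i, ∫ ω, Real.exp ((X i ω / b) ^ 2) ≤ 2) →
        (∀ ω, ∃ σ : Equiv.Perm (Fin n),
          (∀ i, Y i ω = |X (σ i) ω|) ∧ Antitone fun i => Y i ω) →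
        ∫ ω, Real.sqrt ((1 / (k : ℝ)) *
            ∑ i ∈ Finset.univ.filter (fun i : Fin n => (i : ℕ) < k), (Y i ω) ^ 2)
          ≤ c * b * Real.sqrt (Real.log (2 * n / k)) := by
  refine ⟨1, one_pos, ?_⟩
  intro Ω mΩ hprob n k hk hkn b hb X Y hXm hXint hXexp hY
  have hk0 : (0:ℝ) < (k:ℝ) := by exact_mod_cast hk
  have hn0 : (0:ℝ) < (n:ℝ) := lt_of_lt_of_le hk0 (by exact_mod_cast hkn)
  set A : ℝ := 2 * n / k with hA
  have hA2 : (2:ℝ) ≤ A := by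
    rw [hA, le_div_iff₀ hk0]
    have : (k:ℝ) ≤ n := by exact_mod_cast hkn
    nlinarith
  have hApos : (0:ℝ) < A := lt_of_lt_of_le two_pos hA2
  set A' : ℝ := Real.log A with hA'
  have hA'pos : (0:ℝ) < A' := Real.log_pos (lt_of_lt_of_le one_lt_two hA2)
  have hsA' : (0:ℝ) < Real.sqrt A' := Real.sqrt_pos.mpr hA'pos
  set F : Finset (Fin n) := Finset.univ.filter (fun i : Fin n => (i : ℕ) < k) with hF
  have hFcard : F.card = k := by
    have : F = Finset.map (Fin.castLEEmb hkn) Finset.univ := by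
      ext i
      simp [hF, Fin.castLEEmb, Fin.castLE, Fin.ext_iff]
      constructor
      · intro hi; exact ⟨⟨i, hi⟩, rfl⟩
      · rintro ⟨j, hj⟩; omega
    simp [this]
  set S : Ω → ℝ := fun ω => (1 / (k:ℝ)) * ∑ i, Real.exp ((X i ω / b) ^ 2) with hS
  have hSint : Integrable S := by
    exact (integrable_finset_sum _ (fun i _ => hXint i)).const_mul _
  have hSone : ∀ ω, 1 ≤ S ω := by
    intro ω
    have h1 : (k:ℝ) ≤ ∑ i : Fin n, Real.exp ((X i ω / b) ^ 2) := by
      calc (k:ℝ) ≤ (n:ℝ) := by exact_mod_cast hkn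
        _ = ∑ _i : Fin n, (1:ℝ) := by simp
        _ ≤ _ := Finset.sum_le_sum fun i _ =>
            Real.one_le_exp (sq_nonneg _)
    have h2 : 1 ≤ (1 / (k:ℝ)) * ∑ i, Real.exp ((X i ω / b) ^ 2) := by
      rw [one_div, inv_mul_eq_div, le_div_iff₀ hk0]
      simpa using h1
    exact h2
  -- pointwise bound
  set g : Ω → ℝ := fun ω => b * ((2 * A' - 1 + S ω / A) / (2 * Real.sqrt A')) with hg
  have key : ∀ ω, Real.sqrt ((1 / (k:ℝ)) * ∑ i ∈ F, (Y i ω) ^ 2) ≤ g ω := by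
    intro ω
    obtain ⟨σ, hσY, -⟩ := hY ω
    set W : ℝ := (1 / (k:ℝ)) * ∑ i ∈ F, (Y i ω / b) ^ 2 with hW
    have hWnn : 0 ≤ W := by
      apply mul_nonneg (by positivity)
      exact Finset.sum_nonneg fun i _ => sq_nonneg _
    -- Jensen: exp W ≤ (1/k) ∑_{i∈F} exp((Y i ω / b)^2)
    have jensen : Real.exp W ≤ (1 / (k:ℝ)) * ∑ i ∈ F, Real.exp ((Y i ω / b) ^ 2) := by
      have := convexOn_exp.map_sum_le (t := F) (w := fun _ => 1 / (k:ℝ))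
        (p := fun i => (Y i ω / b) ^ 2)
        (fun i _ => by positivity)
        (by simp [hFcard]; field_simp)
        (fun i _ => Set.mem_univ _)
      simpa [hW, Finset.mul_sum, smul_eq_mul] using this
    -- rearrangement: ∑_{i∈F} exp((Y i / b)^2) ≤ ∑_{j} exp((X j / b)^2)
    have rearr : ∑ i ∈ F, Real.exp ((Y i ω / b) ^ 2)
        ≤ ∑ j : Fin n, Real.exp ((X j ω / b) ^ 2) := by
      have heq : ∀ i, Real.exp ((Y i ω / b) ^ 2) = Real.exp ((X (σ i) ω / b) ^ 2) := by
        intro i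
        rw [hσY i]
        congr 1
        rw [div_pow, div_pow, sq_abs]
      calc ∑ i ∈ F, Real.exp ((Y i ω / b) ^ 2)
          = ∑ i ∈ F, Real.exp ((X (σ i) ω / b) ^ 2) := Finset.sum_congr rfl fun i _ => heq i
        _ = ∑ j ∈ F.image σ, Real.exp ((X j ω / b) ^ 2) := by
            rw [Finset.sum_image (fun x _ y _ h => σ.injective h)]
        _ ≤ ∑ j : Fin n, Real.exp ((X j ω / b) ^ 2) :=
            Finset.sum_le_sum_of_subset_of_nonneg (Finset.subset_univ _)
              (fun j _ _ => (Real.exp_pos _).le)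
    have hexpWS : Real.exp W ≤ S ω := by
      refine jensen.trans ?_
      rw [hS]
      exact mul_le_mul_of_nonneg_left rearr (by positivity)
    have hWlog : W ≤ Real.log (S ω) := by
      rw [← Real.log_exp W]
      exact Real.log_le_log (Real.exp_pos _) hexpWS
    have hSpos : 0 < S ω := lt_of_lt_of_le one_pos (hSone ω)
    have hlogS : Real.log (S ω) ≤ A' + (S ω / A - 1) := by
      have h1 : Real.log (S ω / A) ≤ S ω / A - 1 :=
        Real.log_le_sub_one_of_pos (by positivity)
      have h2 : Real.log (S ω / A) = Real.log (S ω) - A' := by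
        rw [Real.log_div (ne_of_gt hSpos) (ne_of_gt hApos)]
      linarith
    have hWle : W ≤ 2 * A' - 1 + S ω / A - A' := by linarith
    -- elementary: √x ≤ (x + A')/(2√A')
    have elem : ∀ x : ℝ, 0 ≤ x → Real.sqrt x ≤ (x + A') / (2 * Real.sqrt A') := by
      intro x hx
      rw [le_div_iff₀ (by positivity)]
      nlinarith [Real.sq_sqrt hx, Real.sq_sqrt hA'pos.le, Real.sqrt_nonneg x,
        Real.sqrt_nonneg A', sq_nonneg (Real.sqrt x - Real.sqrt A')]
    have hsplit : (1 / (k:ℝ)) * ∑ i ∈ F, (Y i ω) ^ 2 = b ^ 2 * W := by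
      rw [hW, Finset.mul_sum, Finset.mul_sum, Finset.mul_sum]
      congr 1
      ext i
      field_simp
    calc Real.sqrt ((1 / (k:ℝ)) * ∑ i ∈ F, (Y i ω) ^ 2)
        = b * Real.sqrt W := by
          rw [hsplit, Real.sqrt_mul (sq_nonneg b), Real.sqrt_sq hb.le]
      _ ≤ b * ((W + A') / (2 * Real.sqrt A')) :=
          mul_le_mul_of_nonneg_left (elem W hWnn) hb.le
      _ ≤ g ω := by
          rw [hg]
          apply mul_le_mul_of_nonneg_left _ hb.le
          apply div_le_div_of_nonneg_right _ (by positivity)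
          linarith
  have hgint : Integrable g := by
    apply Integrable.const_mul
    apply Integrable.div_const
    exact (integrable_const _).add (hSint.div_const _)
  have hmono : ∫ ω, Real.sqrt ((1 / (k:ℝ)) * ∑ i ∈ F, (Y i ω) ^ 2) ≤ ∫ ω, g ω := by
    refine integral_mono_of_nonneg (Filter.Eventually.of_forall fun ω => Real.sqrt_nonneg _)
      hgint (Filter.Eventually.of_forall key)
  have hSint_le : ∫ ω, S ω ≤ A := by
    have : ∫ ω, S ω = (1 / (k:ℝ)) * ∑ i, ∫ ω, Real.exp ((X i ω / b) ^ 2) := by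
      rw [hS]
      rw [integral_const_mul]
      congr 1
      exact integral_finset_sum _ fun i _ => hXint i
    rw [this, hA]
    have hsum : ∑ i : Fin n, ∫ ω, Real.exp ((X i ω / b) ^ 2) ≤ 2 * n := by
      calc ∑ i : Fin n, ∫ ω, Real.exp ((X i ω / b) ^ 2)
          ≤ ∑ _i : Fin n, (2:ℝ) := Finset.sum_le_sum fun i _ => hXexp i
        _ = 2 * n := by simp [mul_comm]
    rw [one_div, inv_mul_eq_div, div_le_div_iff₀ hk0 hk0]
    nlinarith
  have hgval : ∫ ω, g ω ≤ b * Real.sqrt A' := by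
    have h1 : ∫ ω, g ω = b * ((2 * A' - 1 + (∫ ω, S ω) / A) / (2 * Real.sqrt A')) := by
      rw [hg]
      rw [integral_const_mul]
      congr 1
      rw [integral_div]
      congr 1
      rw [integral_add (integrable_const _) (hSint.div_const _), integral_const]
      simp [integral_div]
    rw [h1]
    have h2 : (2 * A' - 1 + (∫ ω, S ω) / A) / (2 * Real.sqrt A') ≤ Real.sqrt A' := by
      rw [div_le_iff₀ (by positivity)]
      have h3 : (∫ ω, S ω) / A ≤ 1 := by
        rw [div_le_one hApos]; exact hSint_le
      have h4 := Real.mul_self_sqrt hA'pos.le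
      nlinarith
    exact mul_le_mul_of_nonneg_left h2 hb.le
  rw [one_mul]
  exact hmono.trans hgval
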